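/- For every n ≥ 4 and every vertex π of the Bubble-sort graph BS_n, a 4-element set of permutations is the vertex set of a 4-cycle of BS_n containing π if and only if it equals {π, π·b_i, π·b_j, π·b_i·b_j} for some indices with 1 ≤ i < j−1 ≤ n−2 (i.e. the two adjacent transpositions b_i and b_j are independent: their indices differ by at least 2, so they commute); equivalently, every 4-cycle of BS_n has canonical form (b_j b_i)² with 1 ≤ i < j−1 ≤ n−2. -/

import Mathlib

/-- The adjacent transposition `b_i` (1-indexed, swapping positions `i` and `i+1`,
i.e. the 0-indexed positions `i-1` and `i` of `Fin n`), extended by `1` outside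
the valid range `1 ≤ i ≤ n-1`. -/
def bsGen (n i : ℕ) : Equiv.Perm (Fin n) :=
  if h : 0 < i ∧ i < n then
    Equiv.swap ⟨i - 1, lt_of_le_of_lt (Nat.pred_le i) h.2⟩ ⟨i, h.2⟩
  else 1

theorem bsGen_ne_one (n i : ℕ) (h1 : 0 < i) (h2 : i < n) : bsGen n i ≠ 1 := by
  rw [bsGen, dif_pos ⟨h1, h2⟩]
  intro h
  have h' := congrArg Fin.val (Equiv.swap_eq_one_iff.mp h)
  simp at h'
  omega

theorem bsGen_mul_self (n i : ℕ) : bsGen n i * bsGen n i = 1 := by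
  rw [bsGen]; split
  · exact Equiv.swap_mul_self _ _
  · simp

/-- The Bubble-sort graph `BS_n` on the symmetric group `Sym_n = Equiv.Perm (Fin n)`:
`π` and `τ` are adjacent iff `τ = π * b_i` for some `1 ≤ i ≤ n-1`. -/
def BS (n : ℕ) : SimpleGraph (Equiv.Perm (Fin n)) where
  Adj π τ := ∃ i, 0 < i ∧ i < n ∧ τ = π * bsGen n i
  symm := by
    refine ⟨?_⟩
    rintro π τ ⟨i, h1, h2, rfl⟩
    exact ⟨i, h1, h2, by rw [mul_assoc, bsGen_mul_self, mul_one]⟩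
  loopless := by
    refine ⟨?_⟩
    rintro π ⟨i, h1, h2, h⟩
    exact bsGen_ne_one n i h1 h2 (left_eq_mul.mp h)

/-- `H` is an `ℓ`-cycle subgraph of `BS n`: the subgraph traced by some cycle walk
with `ℓ` vertices (equivalently, of length `ℓ`).  Since a cycle subgraph determines
the traversal up to starting vertex and direction, counting such subgraphs counts
cycles once regardless of starting vertex and direction. -/
def IsCycleSub {n : ℕ} (H : (BS n).Subgraph) (ℓ : ℕ) : Prop :=
  ∃ (u : Equiv.Perm (Fin n)) (w : (BS n).Walk u u),
    w.IsCycle ∧ w.length = ℓ ∧ H = w.toSubgraph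

/- ### Auxiliary machinery -/

def g (i k : ℕ) : ℕ := if k + 1 = i then i else if k = i then i - 1 else k

lemma gSpec (i k : ℕ) (hi : 0 < i) :
    (k + 1 = i ∧ g i k = k + 1) ∨ (k = i ∧ g i k + 1 = k) ∨
      (k + 1 ≠ i ∧ k ≠ i ∧ g i k = k) := by
  simp only [g]; split_ifs <;> omega

lemma bsGen_val {n i : ℕ} (h1 : 0 < i) (h2 : i < n) (x : Fin n) :
    (bsGen n i x : ℕ) = g i (x : ℕ) := by
  rw [bsGen, dif_pos ⟨h1, h2⟩, Equiv.swap_apply_def]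
  split_ifs with hx1 hx2
  · have hv : (x : ℕ) = i - 1 := by rw [hx1]
    simp only [g]; split_ifs <;> omega
  · have hv : (x : ℕ) = i := by rw [hx2]
    simp only [g]; split_ifs <;> omega
  · have hv1 : (x : ℕ) ≠ i - 1 := fun h => hx1 (Fin.ext h)
    have hv2 : (x : ℕ) ≠ i := fun h => hx2 (Fin.ext h)
    simp only [g]; split_ifs <;> omega

lemma bsGen_mul_val {n i j : ℕ} (hi1 : 0 < i) (hi2 : i < n) (hj1 : 0 < j) (hj2 : j < n)
    (x : Fin n) : ((bsGen n i * bsGen n j) x : ℕ) = g i (g j (x : ℕ)) := by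
  rw [Equiv.Perm.mul_apply, bsGen_val hi1 hi2, bsGen_val hj1 hj2]

lemma bsGen_comm {n i j : ℕ} (hi1 : 0 < i) (hj2 : j < n) (hij : i + 1 < j) :
    bsGen n i * bsGen n j = bsGen n j * bsGen n i := by
  have hi2 : i < n := by omega
  have hj1 : 0 < j := by omega
  ext x
  rw [bsGen_mul_val hi1 hi2 hj1 hj2, bsGen_mul_val hj1 hj2 hi1 hi2]
  have s1 := gSpec j (x : ℕ) hj1
  have s2 := gSpec i (g j (x : ℕ)) hi1
  have s3 := gSpec i (x : ℕ) hi1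
  have s4 := gSpec j (g i (x : ℕ)) hj1
  omega

lemma bsGen_inv (n i : ℕ) : (bsGen n i)⁻¹ = bsGen n i :=
  inv_eq_of_mul_eq_one_right (bsGen_mul_self n i)

lemma bsGen_ne_bsGen {n i j : ℕ} (hi1 : 0 < i) (hj2 : j < n) (hij : i + 1 < j) :
    bsGen n i ≠ bsGen n j := by
  intro h
  have hi2 : i < n := by omega
  have := congrArg (fun p : Equiv.Perm (Fin n) => ((p ⟨i, hi2⟩ : Fin n) : ℕ)) h
  simp only [bsGen_val hi1 hi2, bsGen_val (by omega : 0 < j) hj2] at this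
  simp only [g] at this
  split_ifs at this <;> omega

lemma bsGen_mul_ne_one {n i j : ℕ} (hi1 : 0 < i) (hj2 : j < n) (hij : i + 1 < j) :
    bsGen n i * bsGen n j ≠ 1 := by
  intro h
  have := eq_inv_of_mul_eq_one_left h
  rw [bsGen_inv] at this
  exact bsGen_ne_bsGen hi1 hj2 hij this

lemma key (n a b c d : ℕ) (ha1 : 0 < a) (ha2 : a < n) (hb1 : 0 < b) (hb2 : b < n)
    (hc1 : 0 < c) (hc2 : c < n) (hd1 : 0 < d) (hd2 : d < n)
    (hab : a ≠ b) (hbc : b ≠ c)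
    (E : ∀ k, k < n → g a (g b k) = g d (g c k)) :
    c = a ∧ d = b ∧ (a + 1 < b ∨ b + 1 < a) := by
  have pt : ∀ k, k < n →
      ((g b k + 1 = a ∧ g a (g b k) = g b k + 1) ∨ (g b k = a ∧ g a (g b k) + 1 = g b k) ∨
        (g b k + 1 ≠ a ∧ g b k ≠ a ∧ g a (g b k) = g b k)) ∧
      ((k + 1 = b ∧ g b k = k + 1) ∨ (k = b ∧ g b k + 1 = k) ∨ (k + 1 ≠ b ∧ k ≠ b ∧ g b k = k)) ∧
      ((g c k + 1 = d ∧ g d (g c k) = g c k + 1) ∨ (g c k = d ∧ g d (g c k) + 1 = g c k) ∨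
        (g c k + 1 ≠ d ∧ g c k ≠ d ∧ g d (g c k) = g c k)) ∧
      ((k + 1 = c ∧ g c k = k + 1) ∨ (k = c ∧ g c k + 1 = k) ∨ (k + 1 ≠ c ∧ k ≠ c ∧ g c k = k)) ∧
      g a (g b k) = g d (g c k) :=
    fun k hk => ⟨gSpec a (g b k) ha1, gSpec b k hb1, gSpec d (g c k) hd1, gSpec c k hc1, E k hk⟩
  rcases (show b = a + 1 ∨ a = b + 1 ∨ a + 1 < b ∨ b + 1 < a by omega) with hD | hD | hI | hI
  · have P1 := pt a (by omega)
    have P2 := pt (a+1) (by omega)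
    omega
  · have P1 := pt (b-1) (by omega)
    have P2 := pt b (by omega)
    omega
  all_goals {
    rcases (show c = d ∨ d = c + 1 ∨ c = d + 1 ∨ c + 1 < d ∨ d + 1 < c by omega)
      with h2 | h2 | h2 | h2 | h2
    · have P1 := pt a (by omega)
      omega
    · have P1 := pt (c-1) (by omega)
      omega
    · have P1 := pt (d+1) (by omega)
      omega
    · have P1 := pt c (by omega)
      have P2 := pt d (by omega)
      omega
    · have P1 := pt c (by omega)
      have P2 := pt d (by omega)
      omega }

lemma quad_swap34 {α : Type*} (a b c d : α) : ({a, b, c, d} : Set α) = {a, b, d, c} := by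
  ext x; simp only [Set.mem_insert_iff, Set.mem_singleton_iff]; tauto

lemma quad_swap12 {α : Type*} (a b c d : α) : ({a, b, c, d} : Set α) = {b, a, c, d} := by
  ext x; simp only [Set.mem_insert_iff, Set.mem_singleton_iff]; tauto

lemma quad_swap23 {α : Type*} (a b c d : α) : ({a, b, c, d} : Set α) = {a, c, b, d} := by
  ext x; simp only [Set.mem_insert_iff, Set.mem_singleton_iff]; tauto

lemma quad_perm3 {α : Type*} (a b c d : α) : ({a, b, c, d} : Set α) = {c, d, b, a} := by
  ext x; simp only [Set.mem_insert_iff, Set.mem_singleton_iff]; tauto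

lemma quad_perm4 {α : Type*} (a b c d : α) : ({a, b, c, d} : Set α) = {d, c, a, b} := by
  ext x; simp only [Set.mem_insert_iff, Set.mem_singleton_iff]; tauto

lemma or5_dedup (p q r s : Prop) : (p ∨ q ∨ r ∨ s ∨ p) ↔ (p ∨ q ∨ r ∨ s) := by tauto

lemma or5_dedup' (p q r s : Prop) : (p ∨ q ∨ r ∨ s) ↔ (p ∨ q ∨ s ∨ r ∨ p ∨ False) := by tauto

set_option maxHeartbeats 1000000 in

/-- for `n ≥ 4` and any vertex `π` of `BS_n`, a set of permutations is the
vertex set of a 4-cycle through `π` iff it is `{π, π·b_i, π·b_j, π·b_i·b_j}` for some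
independent pair `1 ≤ i < j-1 ≤ n-2` (i.e. `i + 1 < j < n`); equivalently every 4-cycle
has canonical form `(b_j b_i)²` with independent `b_i, b_j`. -/
theorem bs_four_cycles_characterization (n : ℕ) (hn : 4 ≤ n) (π : Equiv.Perm (Fin n))
    (S : Set (Equiv.Perm (Fin n))) :
    (∃ (u : Equiv.Perm (Fin n)) (w : (BS n).Walk u u),
        w.IsCycle ∧ w.length = 4 ∧ π ∈ w.support ∧ S = {x | x ∈ w.support}) ↔
      ∃ i j : ℕ, 1 ≤ i ∧ i + 1 < j ∧ j < n ∧
        S = {π, π * bsGen n i, π * bsGen n j, π * bsGen n i * bsGen n j} := by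
  have sq : ∀ (x : Equiv.Perm (Fin n)) (t : ℕ), x * bsGen n t * bsGen n t = x :=
    fun x t => by rw [mul_assoc, bsGen_mul_self, mul_one]
  constructor
  · rintro ⟨u, w, hcyc, hlen, hπ, hS⟩
    cases w with
    | nil => simp at hlen
    | cons e1 w =>
    rename_i v1
    cases w with
    | nil => simp at hlen
    | cons e2 w =>
    rename_i v2
    cases w with
    | nil => simp at hlen
    | cons e3 w =>
    rename_i v3
    cases w with
    | nil => simp at hlen
    | cons e4 w =>
    rename_i v4
    cases w with
    | cons e5 w => simp [SimpleGraph.Walk.length_cons] at hlen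
    | nil =>
    obtain ⟨a, ha1, ha2, hv1⟩ : ∃ i, 0 < i ∧ i < n ∧ v1 = u * bsGen n i := e1
    obtain ⟨b, hb1, hb2, hv2⟩ : ∃ i, 0 < i ∧ i < n ∧ v2 = v1 * bsGen n i := e2
    obtain ⟨c, hc1, hc2, hv3⟩ : ∃ i, 0 < i ∧ i < n ∧ v3 = v2 * bsGen n i := e3
    obtain ⟨d, hd1, hd2, hu⟩ : ∃ i, 0 < i ∧ i < n ∧ u = v3 * bsGen n i := e4
    subst hv1 hv2 hv3
    -- cycle distinctness
    rw [SimpleGraph.Walk.isCycle_def] at hcyc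
    obtain ⟨-, -, hnd⟩ := hcyc
    simp only [SimpleGraph.Walk.support, SimpleGraph.Walk.support_cons, SimpleGraph.Walk.support_nil,
      List.tail_cons, List.nodup_cons, List.mem_cons, List.mem_singleton,
      List.not_mem_nil, or_false, List.nodup_nil, and_true, not_or] at hnd
    obtain ⟨⟨h12, h13, h10⟩, ⟨h23, h20⟩, h30, -⟩ := hnd
    have hab : a ≠ b := by
      rintro rfl
      exact h20 (sq u a)
    have hbc : b ≠ c := by
      rintro rfl
      exact h13 (sq (u * bsGen n a) b).symm
    -- group relation
    have hrel : bsGen n a * (bsGen n b * (bsGen n c * bsGen n d)) = 1 := by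
      apply mul_left_cancel (a := u)
      rw [mul_one]
      simp only [← mul_assoc]
      exact hu.symm
    have hEq : bsGen n a * bsGen n b = bsGen n d * bsGen n c := by
      have h1 : (bsGen n a * bsGen n b) * (bsGen n c * bsGen n d) = 1 := by
        simpa [mul_assoc] using hrel
      have h2 := eq_inv_of_mul_eq_one_left h1
      rw [mul_inv_rev, bsGen_inv, bsGen_inv] at h2
      exact h2
    have E : ∀ k, k < n → g a (g b k) = g d (g c k) := by
      intro k hk
      have h3 := congrArg (fun p : Equiv.Perm (Fin n) => ((p ⟨k, hk⟩ : Fin n) : ℕ)) hEq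
      simpa only [bsGen_mul_val ha1 ha2 hb1 hb2, bsGen_mul_val hd1 hd2 hc1 hc2] using h3
    obtain ⟨hca, hdb, hind⟩ := key n a b c d ha1 ha2 hb1 hb2 hc1 hc2 hd1 hd2 hab hbc E
    subst hca hdb
    -- after substitution the two generators are named `c` and `d`
    have hcomm : bsGen n c * bsGen n d = bsGen n d * bsGen n c := by
      rcases hind with h | h
      · exact bsGen_comm ha1 hb2 h
      · exact (bsGen_comm hb1 ha2 h).symm
    have swapba : ∀ x : Equiv.Perm (Fin n),
        x * bsGen n d * bsGen n c = x * bsGen n c * bsGen n d := fun x => by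
      rw [mul_assoc, ← hcomm, mul_assoc]
    have hv3' : u * bsGen n c * bsGen n d * bsGen n c = u * bsGen n d := by
      rw [mul_assoc (u * bsGen n c), ← hcomm, ← mul_assoc, sq u c]
    -- the support as a set
    have hSet : S = {u, u * bsGen n c, u * bsGen n c * bsGen n d, u * bsGen n d} := by
      rw [hS]
      ext x
      simp only [SimpleGraph.Walk.support, SimpleGraph.Walk.support_cons, SimpleGraph.Walk.support_nil,
        List.mem_cons, List.not_mem_nil, List.mem_singleton, Set.mem_setOf_eq,
        Set.mem_insert_iff, Set.mem_singleton_iff, or_false, hv3']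
      exact or5_dedup _ _ _ _
    have hπ' : π = u ∨ π = u * bsGen n c ∨ π = u * bsGen n c * bsGen n d ∨
        π = u * bsGen n d := by
      simp only [SimpleGraph.Walk.support, SimpleGraph.Walk.support_cons, SimpleGraph.Walk.support_nil,
        List.mem_cons, List.not_mem_nil, List.mem_singleton, or_false, hv3'] at hπ
      exact (or5_dedup _ _ _ _).mp hπ
    have main : S = {π, π * bsGen n c, π * bsGen n d, π * bsGen n c * bsGen n d} := by
      rcases hπ' with h | h | h | h <;> subst h
      · rw [hSet]
        exact quad_swap34 _ _ _ _
      · rw [hSet, sq u c]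
        exact quad_swap12 _ _ _ _
      · rw [hSet, hv3', sq u d, sq (u * bsGen n c) d]
        exact quad_perm3 _ _ _ _
      · rw [hSet, swapba u, sq (u * bsGen n c) d, sq u d]
        exact quad_perm4 _ _ _ _
    rcases hind with h | h
    · exact ⟨c, d, ha1, h, hb2, main⟩
    · refine ⟨d, c, hb1, h, ha2, ?_⟩
      rw [main, swapba π]
      exact quad_swap23 _ _ _ _
  · rintro ⟨i, j, hi1, hij, hj2, hSe⟩
    have hi2 : i < n := by omega
    have hj1 : 0 < j := by omega
    have hA1 : bsGen n i ≠ 1 := bsGen_ne_one n i hi1 hi2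
    have hB1 : bsGen n j ≠ 1 := bsGen_ne_one n j hj1 hj2
    have hAB : bsGen n i ≠ bsGen n j := bsGen_ne_bsGen hi1 hj2 hij
    have hABone : bsGen n i * bsGen n j ≠ 1 := bsGen_mul_ne_one hi1 hj2 hij
    have hcomm := bsGen_comm hi1 hj2 hij
    have e1 : (BS n).Adj π (π * bsGen n i) := ⟨i, hi1, hi2, rfl⟩
    have e2 : (BS n).Adj (π * bsGen n i) (π * bsGen n i * bsGen n j) := ⟨j, hj1, hj2, rfl⟩
    have e3 : (BS n).Adj (π * bsGen n i * bsGen n j) (π * bsGen n j) := by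
      refine ⟨i, hi1, hi2, ?_⟩
      rw [mul_assoc (π * bsGen n i), ← hcomm, ← mul_assoc, sq π i]
    have e4 : (BS n).Adj (π * bsGen n j) π := ⟨j, hj1, hj2, (sq π j).symm⟩
    refine ⟨π, .cons e1 (.cons e2 (.cons e3 (.cons e4 .nil))), ?_, by simp, by simp, ?_⟩
    · -- distinctness of the four vertices
      have d01 : π ≠ π * bsGen n i := fun h => hA1 (left_eq_mul.mp h)
      have d03 : π ≠ π * bsGen n j := fun h => hB1 (left_eq_mul.mp h)
      have d02 : π ≠ π * bsGen n i * bsGen n j := fun h =>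
        hABone (left_eq_mul.mp (by rwa [mul_assoc] at h))
      have d12 : π * bsGen n i ≠ π * bsGen n i * bsGen n j := fun h =>
        hB1 (left_eq_mul.mp h)
      have d13 : π * bsGen n i ≠ π * bsGen n j := fun h => hAB (mul_left_cancel h)
      have d23 : π * bsGen n i * bsGen n j ≠ π * bsGen n j := fun h => by
        rw [mul_assoc] at h
        have h2 : bsGen n i * bsGen n j = 1 * bsGen n j := by
          rw [one_mul]; exact mul_left_cancel h
        exact hA1 (mul_right_cancel h2)
      rw [SimpleGraph.Walk.isCycle_def, SimpleGraph.Walk.isTrail_def]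
      refine ⟨?_, by simp, ?_⟩
      · simp only [SimpleGraph.Walk.edges_cons, SimpleGraph.Walk.edges_nil,
          List.nodup_cons, List.mem_cons, List.not_mem_nil, or_false,
          List.mem_singleton, List.nodup_nil, and_true, Sym2.eq_iff, not_or]
        exact ⟨⟨⟨fun h => d01 h.1, d02⟩, ⟨fun h => d02 h.1, fun h => d03 h.1⟩,
          fun h => d03 h.1, fun h => d13 h.2⟩,
          ⟨⟨fun h => d12 h.1, d13⟩, fun h => d13 h.1, fun h => d23 h.2⟩,
          ⟨fun h => d23 h.1, fun h => d02 h.symm⟩, not_false⟩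
      · simp only [SimpleGraph.Walk.support_cons, SimpleGraph.Walk.support_nil,
          List.tail_cons, List.nodup_cons, List.mem_cons, List.not_mem_nil,
          List.mem_singleton, or_false, List.nodup_nil, and_true, not_or]
        exact ⟨⟨d12, d13, fun h => d01 h.symm⟩, ⟨d23, fun h => d02 h.symm⟩,
          fun h => d03 h.symm, not_false⟩
    · rw [hSe]
      ext x
      simp only [SimpleGraph.Walk.support_cons, SimpleGraph.Walk.support_nil,
        List.mem_cons, List.not_mem_nil, List.mem_singleton, Set.mem_setOf_eq,
        Set.mem_insert_iff, Set.mem_singleton_iff]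
      exact or5_dedup' _ _ _ _
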